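/- For every integer n ≥ 1 and z ∈ {0,1}^n, define BV_z : {0,1}^n → ℕ by BV_z(x) = Σ_{i=1}^n 2^{i−1}·𝟙(x_i = z_i); its unique maximizer is z. Then the infimum, over all randomized strategies μ on deterministic strategies q : List ℕ → {0,1}^n, of sup_{z ∈ {0,1}^n} E_{q∼μ}[τ(q, BV_z, {z})] equals 2 − 2^{−n}; concretely, (a) for every randomized strategy μ there exists z with E_{q∼μ}[τ(q, BV_z, {z})] ≥ 2 − 2^{−n}, and (b) there exists a randomized strategy μ with E_{q∼μ}[τ(q, BV_z, {z})] ≤ 2 − 2^{−n} for every z. -/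

import Mathlib

open scoped ENNReal

namespace BBC

variable {S V : Type*}

/-- The history of observed objective values after `t` queries:
`hist q f t = [f x₁, …, f x_t]`, where `x₁ = q []` and
`x_{t+1} = q [f x₁, …, f x_t]`. -/
def hist (q : List V → S) (f : S → V) : ℕ → List V
  | 0 => []
  | t + 1 => hist q f t ++ [f (q (hist q f t))]

/-- `queryPt q f t` is the `(t+1)`-st queried search point `x_{t+1}`. -/
def queryPt (q : List V → S) (f : S → V) (t : ℕ) : S := q (hist q f t)

/-- The hitting time of a deterministic strategy `q` on objective `f` with
target set `M`: the least `t ≥ 1` with `x_t ∈ M`, valued in `ℕ∞`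
(and `⊤` if no query ever hits `M`). -/
noncomputable def hitTime (q : List V → S) (f : S → V) (M : Set S) : ℕ∞ :=
  sInf ((fun k : ℕ => (k : ℕ∞) + 1) '' {k | queryPt q f k ∈ M})

/-- The expected hitting time of a randomized strategy `μ` (a probability mass
function on deterministic strategies) on `(f, M)`, valued in `[0,∞]`. -/
noncomputable def expHitTime (μ : PMF (List V → S)) (f : S → V) (M : Set S) : ℝ≥0∞ :=
  ∑' q, μ q * (hitTime q f M : ℝ≥0∞)

end BBC

/-- The generalized binary-value function `BV_z`. -/
def BV {n : ℕ} (z x : Fin n → Bool) : ℕ :=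
  ∑ i : Fin n, if x i = z i then 2 ^ (i : ℕ) else 0

/- ### auxiliary lemmas -/

lemma aux_cancel {P A B : ℕ} {a b : Bool} (hA : A < P) (hB : B < P)
    (h : A + (if a then P else 0) = B + (if b then P else 0)) : a = b ∧ A = B := by
  cases a <;> cases b <;> simp_all <;> omega

lemma aux_sum_lt (f : ℕ → Bool) (n : ℕ) :
    (∑ i ∈ Finset.range n, if f i then 2 ^ i else 0) < 2 ^ n := by
  induction n with
  | zero => simp
  | succ m ih =>
    rw [Finset.sum_range_succ, pow_succ]
    have h2 : (0:ℕ) < 2 ^ m := Nat.pow_pos (by norm_num)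
    split <;> omega

lemma aux_sum_inj : ∀ (n : ℕ) (f g : ℕ → Bool),
    (∑ i ∈ Finset.range n, if f i then 2 ^ i else 0)
      = (∑ i ∈ Finset.range n, if g i then 2 ^ i else 0) →
    ∀ i < n, f i = g i := by
  intro n
  induction n with
  | zero => intro f g _ i hi; omega
  | succ m ih =>
    intro f g h i hi
    rw [Finset.sum_range_succ, Finset.sum_range_succ] at h
    obtain ⟨key, h'⟩ := aux_cancel (aux_sum_lt f m) (aux_sum_lt g m) h
    rcases Nat.lt_succ_iff_lt_or_eq.mp hi with h1 | rfl
    · exact ih f g h' i h1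
    · exact key

lemma aux_bool (a b c : Bool) (h : (a == b) = (a == c)) : b = c := by
  revert h; revert a b c; decide

lemma BV_right_inj {n : ℕ} (x z z' : Fin n → Bool) (h : BV z x = BV z' x) : z = z' := by
  set F : (Fin n → Bool) → ℕ → Bool :=
    fun w k => if hk : k < n then (x ⟨k, hk⟩ == w ⟨k, hk⟩) else false with hF
  have e : ∀ w : Fin n → Bool,
      BV w x = ∑ k ∈ Finset.range n, if F w k then 2 ^ k else 0 := by
    intro w
    rw [← Fin.sum_univ_eq_sum_range (fun k => if F w k then 2 ^ k else 0) n]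
    apply Finset.sum_congr rfl
    intro i _
    simp [hF, i.isLt]
  rw [e z, e z'] at h
  have := aux_sum_inj n (F z) (F z') h
  funext i
  have hi := this i i.isLt
  simp only [hF, dif_pos i.isLt, Fin.eta] at hi
  exact aux_bool _ _ _ hi

/-- the decoding strategy starting at `x₀` -/
noncomputable def strat {n : ℕ} (x₀ : Fin n → Bool) : List ℕ → (Fin n → Bool)
  | [] => x₀
  | v :: _ => if h : ∃ z, BV z x₀ = v then h.choose else x₀

section hitTimeLemmas

variable {S V : Type*} (q : List V → S) (f : S → V) (M : Set S)

lemma one_le_hitTime : 1 ≤ BBC.hitTime q f M := by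
  apply le_sInf
  rintro x ⟨k, -, rfl⟩
  exact le_add_self

lemma two_le_hitTime (h : BBC.queryPt q f 0 ∉ M) : 2 ≤ BBC.hitTime q f M := by
  apply le_sInf
  rintro x ⟨k, hk, rfl⟩
  match k with
  | 0 => exact absurd hk h
  | k + 1 =>
    push_cast
    rw [show ((k:ℕ∞) + 1 + 1) = (k:ℕ∞) + 2 by ring]
    exact le_add_self

lemma hitTime_le {k : ℕ} (h : BBC.queryPt q f k ∈ M) :
    BBC.hitTime q f M ≤ (k : ℕ∞) + 1 :=
  sInf_le ⟨k, h, rfl⟩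

end hitTimeLemmas

lemma expHitTime_map {S V α : Type*} (g : α → (List V → S)) (p : PMF α)
    (f : S → V) (M : Set S) :
    BBC.expHitTime (PMF.map g p) f M
      = ∑' a, p a * (BBC.hitTime (g a) f M : ℝ≥0∞) := by
  unfold BBC.expHitTime
  simp_rw [PMF.map_apply, ← ENNReal.tsum_mul_right]
  rw [ENNReal.tsum_comm]
  apply tsum_congr
  intro a
  rw [tsum_eq_single (g a)]
  · simp
  · intro q hq
    simp [hq]

/-- The unrestricted black-box complexity of `{BV_z | z}` is exactly `2 − 2^{−n}`. -/
theorem stmt4 (n : ℕ) (hn : 1 ≤ n) :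
    (∀ μ : PMF (List ℕ → (Fin n → Bool)), ∃ z : Fin n → Bool,
        ENNReal.ofReal (2 - (2 : ℝ) ^ (-(n : ℤ))) ≤ BBC.expHitTime μ (BV z) {z}) ∧
    (∃ μ : PMF (List ℕ → (Fin n → Bool)), ∀ z : Fin n → Bool,
        BBC.expHitTime μ (BV z) {z} ≤ ENNReal.ofReal (2 - (2 : ℝ) ^ (-(n : ℤ)))) := by
  have hcard : Fintype.card (Fin n → Bool) = 2 ^ n := by
    simp [Fintype.card_fun]
  set ε : ℝ≥0∞ := ((2 : ℝ≥0∞) ^ n)⁻¹ with hε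
  have hpow0 : ((2 : ℝ≥0∞) ^ n) ≠ 0 := pow_ne_zero n (by norm_num)
  have hpowtop : ((2 : ℝ≥0∞) ^ n) ≠ ⊤ := ENNReal.pow_ne_top (by norm_num)
  have hε1 : ε ≤ 1 := by
    rw [hε, ENNReal.inv_le_one]
    exact one_le_pow_of_one_le' one_le_two n
  have hεtop : ε ≠ ⊤ := by
    simp [hε, hpow0]
  have hεmul : (2 : ℝ≥0∞) ^ n * ε = 1 := ENNReal.mul_inv_cancel hpow0 hpowtop
  have hconst : ENNReal.ofReal (2 - (2 : ℝ) ^ (-(n : ℤ))) = 2 - ε := by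
    rw [zpow_neg, zpow_natCast, ENNReal.ofReal_sub _ (by positivity),
      ENNReal.ofReal_inv_of_pos (by positivity), ENNReal.ofReal_pow (by norm_num)]
    norm_num [hε]
  have hgoal2 : (2 : ℝ≥0∞) - ε ≤ 1 + (1 - ε) := by
    rw [tsub_le_iff_right, add_assoc, tsub_add_cancel_of_le hε1]
    norm_num
  constructor
  · -- lower bound
    intro μ
    set P : (Fin n → Bool) → ℝ≥0∞ := fun z => ∑' q, if q [] = z then μ q else 0 with hP
    have hPsum : ∑ z, P z = 1 := by
      rw [hP, ← Summable.tsum_finsetSum (fun i _ => ENNReal.summable)]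
      have : ∀ q : List ℕ → (Fin n → Bool),
          (∑ z, if q [] = z then μ q else 0) = μ q := by
        intro q
        rw [Finset.sum_ite_eq Finset.univ (q []) (fun _ => μ q)]
        simp
      simp_rw [this]
      exact μ.tsum_coe
    obtain ⟨z, -, hz⟩ := Finset.exists_min_image Finset.univ P Finset.univ_nonempty
    have hPz : P z ≤ ε := by
      rw [hε, ENNReal.le_inv_iff_mul_le]
      calc P z * 2 ^ n = ∑ _w : Fin n → Bool, P z := by
            rw [Finset.sum_const, nsmul_eq_mul, Finset.card_univ, hcard, mul_comm]
            push_cast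
            ring
        _ ≤ ∑ w, P w := Finset.sum_le_sum (fun w _ => hz w (Finset.mem_univ w))
        _ = 1 := hPsum
    refine ⟨z, ?_⟩
    rw [hconst]
    have hPztop : P z ≠ ⊤ := fun h => hεtop (top_le_iff.mp (h ▸ hPz))
    have hsplit : (∑' q, (if q [] = z then 0 else μ q)) + P z = 1 := by
      rw [hP, ← ENNReal.tsum_add]
      have : ∀ q : List ℕ → (Fin n → Bool),
          (if q [] = z then 0 else μ q) + (if q [] = z then μ q else 0) = μ q := by
        intro q; split <;> simp
      simp_rw [this]
      exact μ.tsum_coe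
    have hQ : (∑' q, (if q [] = z then 0 else μ q)) = 1 - P z :=
      ENNReal.eq_sub_of_add_eq hPztop hsplit
    calc (2 : ℝ≥0∞) - ε ≤ 1 + (1 - ε) := hgoal2
      _ ≤ 1 + (1 - P z) := by
          gcongr
      _ = ∑' q, μ q + ∑' q, (if q [] = z then 0 else μ q) := by
          rw [μ.tsum_coe, hQ]
      _ = ∑' q, (μ q + (if q [] = z then 0 else μ q)) := (ENNReal.tsum_add).symm
      _ ≤ ∑' q, μ q * (BBC.hitTime q (BV z) {z} : ℝ≥0∞) := by
          apply ENNReal.tsum_le_tsum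
          intro q
          by_cases hq : q [] = z
          · simp only [hq, if_pos, add_zero]
            calc μ q = μ q * 1 := (mul_one _).symm
              _ ≤ μ q * (BBC.hitTime q (BV z) {z} : ℝ≥0∞) := by
                  gcongr
                  have := one_le_hitTime q (BV z) ({z} : Set (Fin n → Bool))
                  exact_mod_cast ENat.toENNReal_le.mpr this
          · simp only [hq, if_neg, not_false_iff]
            calc μ q + μ q = μ q * 2 := by ring
              _ ≤ μ q * (BBC.hitTime q (BV z) {z} : ℝ≥0∞) := by
                  gcongr
                  have h0 : BBC.queryPt q (BV z) 0 ∉ ({z} : Set (Fin n → Bool)) := by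
                    simpa [BBC.queryPt, BBC.hist] using hq
                  have := two_le_hitTime q (BV z) _ h0
                  exact_mod_cast ENat.toENNReal_le.mpr this
      _ = BBC.expHitTime μ (BV z) {z} := rfl
  · -- upper bound
    refine ⟨PMF.map strat (PMF.uniformOfFintype (Fin n → Bool)), fun z => ?_⟩
    rw [hconst, expHitTime_map]
    have hval : ∀ x : Fin n → Bool,
        (BBC.hitTime (strat x) (BV z) ({z} : Set (Fin n → Bool)) : ℝ≥0∞)
          ≤ if x = z then 1 else 2 := by
      intro x
      by_cases hx : x = z
      · subst hx
        have h0 : BBC.queryPt (strat x) (BV x) 0 ∈ ({x} : Set (Fin n → Bool)) := by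
          simp [BBC.queryPt, BBC.hist, strat]
        have := hitTime_le (strat x) (BV x) _ h0
        simp only [if_pos rfl]
        calc (BBC.hitTime (strat x) (BV x) {x} : ℝ≥0∞)
            ≤ (((0 : ℕ) : ℕ∞) + 1 : ℕ∞) := ENat.toENNReal_le.mpr this
          _ = 1 := by norm_num
      · have h1 : BBC.queryPt (strat x) (BV z) 1 ∈ ({z} : Set (Fin n → Bool)) := by
          have hhist : BBC.hist (strat x) (BV z) 1 = [BV z x] := by
            simp [BBC.hist, strat]
          have hex : ∃ w, BV w x = BV z x := ⟨z, rfl⟩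
          have : BBC.queryPt (strat x) (BV z) 1 = strat x [BV z x] := by
            rw [BBC.queryPt, hhist]
          rw [this]
          show strat x [BV z x] ∈ ({z} : Set (Fin n → Bool))
          simp only [strat, dif_pos hex]
          have := hex.choose_spec
          exact Set.mem_singleton_iff.mpr (BV_right_inj x _ z this)
        have := hitTime_le (strat x) (BV z) _ h1
        simp only [if_neg hx]
        calc (BBC.hitTime (strat x) (BV z) {z} : ℝ≥0∞)
            ≤ (((1 : ℕ) : ℕ∞) + 1 : ℕ∞) := ENat.toENNReal_le.mpr this
          _ = 2 := by norm_num
    calc ∑' x, (PMF.uniformOfFintype (Fin n → Bool)) x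
            * (BBC.hitTime (strat x) (BV z) {z} : ℝ≥0∞)
        ≤ ∑' x : Fin n → Bool, ε * (if x = z then 1 else 2) := by
          apply ENNReal.tsum_le_tsum
          intro x
          rw [PMF.uniformOfFintype_apply, hcard]
          push_cast
          exact mul_le_mul_right (hval x) _
      _ = ∑ x : Fin n → Bool, (ε + (if x = z then 0 else ε)) := by
          rw [tsum_fintype]
          apply Finset.sum_congr rfl
          intro x _
          split <;> simp [mul_two]
      _ ≤ 2 - ε := by
          rw [Finset.sum_add_distrib]
          apply ENNReal.le_sub_of_add_le_right hεtop
          have hA : (∑ x : Fin n → Bool, (if x = z then 0 else ε)) + ε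
              = ∑ _x : Fin n → Bool, ε := by
            have : (∑ x : Fin n → Bool, (if x = z then ε else 0)) = ε := by
              rw [Finset.sum_ite_eq' Finset.univ z (fun _ => ε)]
              simp
            rw [← this, ← Finset.sum_add_distrib]
            apply Finset.sum_congr rfl
            intro x _
            split <;> simp
          have hB : (∑ _x : Fin n → Bool, ε) = 1 := by
            rw [Finset.sum_const, nsmul_eq_mul, Finset.card_univ, hcard]
            push_cast
            exact hεmul
          rw [add_assoc, hA, hB]
          norm_num
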